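/- If σ_h, σ_v generate a transitive subgroup of Σ_k, then the retiled permutations σ'_h, σ'_v (defined as in the retiling construction with coprime q > p ≥ 1) generate a transitive subgroup of Σ_{kq}. -/

import Mathlib

/-- if `σh, σv` generate a transitive subgroup of the symmetric
group on the `k` squares, then the retiled permutations `σh', σv'` (for coprime
`q > p ≥ 1`, defined 0-based on pairs as in the retiling construction) generate
a transitive subgroup of the symmetric group on the `kq` parallelograms. -/
theorem retiling_preserves_transitivity (k p q : ℕ) (hp : 1 ≤ p) (hpq : p < q)
    (hcop : Nat.Coprime p q) (σh σv : Equiv.Perm (Fin k))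
    (σh' σv' : Equiv.Perm (Fin k × Fin q))
    (hσh' : ∀ (i : Fin k) (j : Fin q),
      if (j : ℕ) + 1 < q then
        (σh' (i, j)).1 = i ∧ ((σh' (i, j)).2 : ℕ) = (j : ℕ) + 1
      else
        (σh' (i, j)).1 = σh i ∧ ((σh' (i, j)).2 : ℕ) = 0)
    (hσv' : ∀ (i : Fin k) (j : Fin q),
      if (j : ℕ) + p < q then
        (σv' (i, j)).1 = σv i ∧ ((σv' (i, j)).2 : ℕ) = (j : ℕ) + p
      else
        (σv' (i, j)).1 = σv (σh i) ∧ ((σv' (i, j)).2 : ℕ) = (j : ℕ) + p - q)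
    (htrans : ∀ i j : Fin k,
      ∃ g ∈ Subgroup.closure ({σh, σv} : Set (Equiv.Perm (Fin k))), g i = j) :
    ∀ x y : Fin k × Fin q,
      ∃ g ∈ Subgroup.closure ({σh', σv'} : Set (Equiv.Perm (Fin k × Fin q))),
        g x = y := by
  have hq0 : 0 < q := lt_of_le_of_lt (Nat.zero_le p) hpq
  set z0 : Fin q := ⟨0, hq0⟩ with hz0
  set C := Subgroup.closure ({σh', σv'} : Set (Equiv.Perm (Fin k × Fin q))) with hC
  have hhmem : σh' ∈ C := Subgroup.subset_closure (Set.mem_insert _ _)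
  have hvmem : σv' ∈ C := Subgroup.subset_closure (Set.mem_insert_of_mem _ rfl)
  -- one step of σh' in the "increment" regime
  have hstep : ∀ (i : Fin k) (j : Fin q) (h : (j : ℕ) + 1 < q),
      σh' (i, j) = (i, ⟨(j : ℕ) + 1, h⟩) := by
    intro i j h
    have := hσh' i j
    rw [if_pos h] at this
    exact Prod.ext this.1 (Fin.ext this.2)
  -- powers of σh' within a row
  have hpow : ∀ (n : ℕ) (i : Fin k) (j : Fin q) (h : (j : ℕ) + n < q),
      (σh' ^ n) (i, j) = (i, ⟨(j : ℕ) + n, h⟩) := by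
    intro n
    induction n with
    | zero => intro i j h; simp
    | succ m ih =>
      intro i j h
      have h1 : (j : ℕ) + 1 < q := by omega
      rw [pow_succ, Equiv.Perm.mul_apply, hstep i j h1]
      have h2 : ((⟨(j : ℕ) + 1, h1⟩ : Fin q) : ℕ) + m < q := by simpa using by omega
      rw [ih i ⟨(j : ℕ) + 1, h1⟩ h2]
      exact Prod.ext rfl (Fin.ext (by simp; omega))
  -- σh'^q fixes column 0 and applies σh to the row
  have hq' : ∀ i : Fin k, (σh' ^ q) (i, z0) = (σh i, z0) := by
    intro i
    obtain ⟨m, hm⟩ : ∃ m, q = m + 1 := ⟨q - 1, by omega⟩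
    have hlt : (z0 : ℕ) + m < q := by simp [hz0]; omega
    have hqm : σh' ^ q = σh' ^ 1 * σh' ^ m := by rw [← pow_add]; congr 1; omega
    rw [hqm, pow_one, Equiv.Perm.mul_apply]
    rw [show (σh' ^ m) (i, z0) = (i, ⟨(z0 : ℕ) + m, hlt⟩) from hpow m i z0 hlt]
    have := hσh' i ⟨(z0 : ℕ) + m, hlt⟩
    rw [if_neg (by simp [hz0]; omega)] at this
    refine Prod.ext this.1 (Fin.ext ?_)
    simp only [hz0]
    simpa [hz0] using this.2
  -- the subgroup of permutations of the rows that lift to C on column 0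
  set H : Subgroup (Equiv.Perm (Fin k)) :=
    { carrier := {g | ∃ g' ∈ C, ∀ i : Fin k, g' (i, z0) = (g i, z0)}
      one_mem' := ⟨1, one_mem C, fun i => rfl⟩
      mul_mem' := by
        rintro a b ⟨a', ha'C, ha'⟩ ⟨b', hb'C, hb'⟩
        exact ⟨a' * b', mul_mem ha'C hb'C, fun i => by
          simp [Equiv.Perm.mul_apply, hb' i, ha' (b i)]⟩
      inv_mem' := by
        rintro a ⟨a', ha'C, ha'⟩
        refine ⟨a'⁻¹, inv_mem ha'C, fun i => ?_⟩
        apply a'.injective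
        simp [ha' (a.symm i)] } with hH
  have hσhH : σh ∈ H := ⟨σh' ^ q, pow_mem hhmem q, hq'⟩
  have hσvH : σv ∈ H := by
    refine ⟨(σh' ^ p)⁻¹ * σv', mul_mem (inv_mem (pow_mem hhmem p)) hvmem, fun i => ?_⟩
    have hv := hσv' i z0
    rw [if_pos (by simp [hz0]; omega)] at hv
    have hv' : σv' (i, z0) = (σv i, ⟨(z0 : ℕ) + p, by simp [hz0]; omega⟩) :=
      Prod.ext hv.1 (Fin.ext hv.2)
    rw [Equiv.Perm.mul_apply, hv']
    apply (σh' ^ p).injective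
    simp only [Equiv.Perm.coe_inv, Equiv.apply_symm_apply]
    exact (hpow p (σv i) z0 (by simp [hz0]; omega)).symm
  have hle : Subgroup.closure ({σh, σv} : Set (Equiv.Perm (Fin k))) ≤ H := by
    rw [Subgroup.closure_le]
    rintro x (rfl | rfl)
    · exact hσhH
    · exact hσvH
  -- main argument
  rintro ⟨i, j⟩ ⟨i', j'⟩
  obtain ⟨g, hgmem, hg⟩ := htrans i i'
  obtain ⟨g', hg'C, hg'⟩ := hle hgmem
  refine ⟨σh' ^ (j' : ℕ) * g' * (σh' ^ (j : ℕ))⁻¹,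
    mul_mem (mul_mem (pow_mem hhmem _) hg'C) (inv_mem (pow_mem hhmem _)), ?_⟩
  have hj : (σh' ^ (j : ℕ)) (i, z0) = (i, j) := by
    rw [hpow (j : ℕ) i z0 (by simp [hz0])]
    exact Prod.ext rfl (Fin.ext (by simp [hz0]))
  have hj' : (σh' ^ (j' : ℕ)) (i', z0) = (i', j') := by
    rw [hpow (j' : ℕ) i' z0 (by simp [hz0])]
    exact Prod.ext rfl (Fin.ext (by simp [hz0]))
  simp only [Equiv.Perm.mul_apply]
  rw [← hj, Equiv.Perm.coe_inv, Equiv.symm_apply_apply, hg' i, hg, hj']
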